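/- arXiv:math/0609501 — 9 statements merged into one kernel-verified Lean document; each statement's English description precedes it below -/
import Mathlib

section
/- Let (V, μ, α) be a Hom-associative algebra over a field K of characteristic 0, i.e. μ is bilinear, α : V → V is linear, and μ(α(x), μ(y,z)) = μ(μ(x,y), α(z)) for all x,y,z. Define the bracket [x,y] = μ(x,y) − μ(y,x). Then (V, [·,·], α) is a Hom-Lie algebra: the bracket is skew-symmetric and satisfies the Hom-Jacobi identity [α(x),[y,z]] + [α(y),[z,x]] + [α(z),[x,y]] = 0 for all x,y,z ∈ V. -/
theorem stmt_0 {K V : Type*} [Field K] [CharZero K] [AddCommGroup V] [Module K V]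
    (μ : V →ₗ[K] V →ₗ[K] V) (α : V →ₗ[K] V)
    (hassoc : ∀ x y z : V, μ (α x) (μ y z) = μ (μ x y) (α z)) :
    (∀ x y : V, (μ x y - μ y x) = -(μ y x - μ x y)) ∧
    (∀ x y z : V,
      (μ (α x) (μ y z - μ z y) - μ (μ y z - μ z y) (α x)) +
      (μ (α y) (μ z x - μ x z) - μ (μ z x - μ x z) (α y)) +
      (μ (α z) (μ x y - μ y x) - μ (μ x y - μ y x) (α z)) = 0) := by
  refine ⟨fun x y => by abel, fun x y z => ?_⟩
  simp only [map_sub, LinearMap.sub_apply,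
    hassoc x y z, hassoc x z y, hassoc y z x, hassoc y x z, hassoc z x y, hassoc z y x]
  abel
end

section
/- Every skew-symmetric bilinear map [·,·] on a 2-dimensional vector space V, together with any linear map α : V → V, defines a Hom-Lie algebra; that is, the Hom-Jacobi identity [α(x),[y,z]] + [α(y),[z,x]] + [α(z),[x,y]] = 0 holds automatically for all x,y,z ∈ V. -/
theorem stmt_1 {K V : Type*} [Field K] [CharZero K] [AddCommGroup V] [Module K V]
    (hdim : Module.finrank K V = 2)
    (br : V →ₗ[K] V →ₗ[K] V) (α : V →ₗ[K] V)
    (hskew : ∀ x y : V, br x y = - br y x) :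
    ∀ x y z : V, br (α x) (br y z) + br (α y) (br z x) + br (α z) (br x y) = 0 := by
  have : FiniteDimensional K V := FiniteDimensional.of_finrank_pos (by omega)
  have b : Module.Basis (Fin 2) K V := Module.finBasisOfFinrankEq K V hdim
  have hrep : ∀ v : V, v = b.repr v 0 • b 0 + b.repr v 1 • b 1 := by
    intro v
    have := b.sum_repr v
    rw [Fin.sum_univ_two] at this
    exact this.symm
  have hzero : ∀ v : V, br v v = 0 := by
    intro v
    have := hskew v v
    have h2 : (2 : K) • br v v = 0 := by
      rw [two_smul]; nth_rewrite 2 [this]; abel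
    have := smul_eq_zero.mp h2
    rcases this with h | h
    · exact absurd h two_ne_zero
    · exact h
  intro x y z
  rw [hrep x, hrep y, hrep z]
  simp only [map_add, map_smul, LinearMap.add_apply, LinearMap.smul_apply,
    hzero, smul_zero, zero_add, add_zero, smul_smul]
  rw [hskew (b 1) (b 0)]
  simp only [map_neg, LinearMap.neg_apply, smul_neg]
  module
end

section
/- Let V be a vector space with bilinear multiplication μ and linear map α, and define the α-associator a(x,y,z) = μ(μ(x,y),α(z)) − μ(α(x),μ(y,z)). Let G be a subgroup of the symmetric group S₃ and suppose (V,μ,α) is G-Hom-associative, i.e. Σ_{σ∈G} sgn(σ) a(x_{σ(1)}, x_{σ(2)}, x_{σ(3)}) = 0 for all x₁,x₂,x₃. Then Σ_{σ∈S₃} sgn(σ) a(x_{σ(1)}, x_{σ(2)}, x_{σ(3)}) = 0 for all x₁,x₂,x₃; consequently (V,μ,α) is Hom-Lie admissible. -/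
open QuotientGroup in
lemma coset_sum {H : Type*} [Group H] [Fintype H] (G : Subgroup H) [Fintype G]
    [Fintype (H ⧸ G)] {M : Type*} [AddCommMonoid M] (f : H → M) :
    ∑ σ : H, f σ = ∑ q : H ⧸ G, ∑ g : G, f (q.out * g) := by
  rw [← Finset.sum_product']
  refine (Fintype.sum_equiv (Equiv.ofBijective
    (fun p : (H ⧸ G) × G => p.1.out * (p.2 : H)) ?_) _ _ (fun p => rfl)).symm
  constructor
  · rintro ⟨q, g⟩ ⟨q', g'⟩ h
    simp only at h
    have hq : q = q' := by
      have := congrArg (QuotientGroup.mk (s := G)) h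
      rwa [mk_mul_of_mem _ g.2, mk_mul_of_mem _ g'.2, out_eq', out_eq'] at this
    subst hq
    exact Prod.ext rfl (Subtype.ext (mul_left_cancel h))
  · intro h
    refine ⟨⟨QuotientGroup.mk h, ⟨(QuotientGroup.mk (s := G) h).out⁻¹ * h, ?_⟩⟩, by simp⟩
    exact QuotientGroup.eq.mp (out_eq' _)

theorem stmt_5 {K V : Type*} [Field K] [CharZero K] [AddCommGroup V] [Module K V]
    (μ : V →ₗ[K] V →ₗ[K] V) (α : V →ₗ[K] V)
    (a : V → V → V → V)
    (ha : ∀ x y z : V, a x y z = μ (μ x y) (α z) - μ (α x) (μ y z))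
    (G : Subgroup (Equiv.Perm (Fin 3))) [Fintype G]
    (hG : ∀ x : Fin 3 → V,
      ∑ σ : G, ((Equiv.Perm.sign (σ : Equiv.Perm (Fin 3)) : ℤ) : K) •
        a (x ((σ : Equiv.Perm (Fin 3)) 0)) (x ((σ : Equiv.Perm (Fin 3)) 1))
          (x ((σ : Equiv.Perm (Fin 3)) 2)) = 0) :
    (∀ x : Fin 3 → V,
      ∑ σ : Equiv.Perm (Fin 3), ((Equiv.Perm.sign σ : ℤ) : K) •
        a (x (σ 0)) (x (σ 1)) (x (σ 2)) = 0) ∧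
    (∀ x y z : V,
      (μ (α x) (μ y z - μ z y) - μ (μ y z - μ z y) (α x)) +
      (μ (α y) (μ z x - μ x z) - μ (μ z x - μ x z) (α y)) +
      (μ (α z) (μ x y - μ y x) - μ (μ x y - μ y x) (α z)) = 0) := by
  haveI : Fintype (Equiv.Perm (Fin 3) ⧸ G) := Fintype.ofFinite _
  have part1 : ∀ x : Fin 3 → V,
      ∑ σ : Equiv.Perm (Fin 3), ((Equiv.Perm.sign σ : ℤ) : K) •
        a (x (σ 0)) (x (σ 1)) (x (σ 2)) = 0 := by
    intro x
    rw [coset_sum G]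
    refine Finset.sum_eq_zero fun q _ => ?_
    have : ∑ g : G, ((Equiv.Perm.sign ((q.out * (g : Equiv.Perm (Fin 3)))) : ℤ) : K) •
        a (x ((q.out * (g : Equiv.Perm (Fin 3))) 0)) (x ((q.out * (g : Equiv.Perm (Fin 3))) 1))
          (x ((q.out * (g : Equiv.Perm (Fin 3))) 2))
        = ((Equiv.Perm.sign q.out : ℤ) : K) •
          ∑ g : G, ((Equiv.Perm.sign ((g : Equiv.Perm (Fin 3))) : ℤ) : K) •
            a ((x ∘ q.out) ((g : Equiv.Perm (Fin 3)) 0)) ((x ∘ q.out) ((g : Equiv.Perm (Fin 3)) 1))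
              ((x ∘ q.out) ((g : Equiv.Perm (Fin 3)) 2)) := by
      rw [Finset.smul_sum]
      refine Finset.sum_congr rfl fun g _ => ?_
      rw [smul_smul]
      congr 1
      · rw [map_mul]
        push_cast
        ring
    exact this.trans (by rw [hG (x ∘ q.out), smul_zero])
  refine ⟨part1, fun x y z => ?_⟩
  have h := part1 ![x, y, z]
  rw [show (Finset.univ : Finset (Equiv.Perm (Fin 3))) =
      {1, Equiv.swap 0 1, Equiv.swap 0 2, Equiv.swap 1 2,
       Equiv.swap 0 1 * Equiv.swap 1 2, Equiv.swap 1 2 * Equiv.swap 0 1} from by decide] at h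
  simp +decide [Finset.sum_insert, Finset.mem_insert, Equiv.swap_apply_def,
    Equiv.Perm.mul_apply, Equiv.Perm.sign_swap, ha, map_sub] at h
  simp only [map_sub, LinearMap.sub_apply]
  have h2 : -((μ ((μ x) y)) (α z) - (μ (α x)) ((μ y) z) +
      ((μ (α y)) ((μ x) z) - (μ ((μ y) x)) (α z) +
        ((μ (α z)) ((μ y) x) - (μ ((μ z) y)) (α x) +
          ((μ (α x)) ((μ z) y) - (μ ((μ x) z)) (α y) +
            ((μ ((μ y) z)) (α x) - (μ (α y)) ((μ z) x) +
              ((μ ((μ z) x)) (α y) - (μ (α z)) ((μ x) y))))))) = 0 := by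
    rw [h, neg_zero]
  rw [← h2]
  abel
end

section
/- Let (V, μ, α) be a Hom-algebra with commutator bracket [x,y] = μ(x,y) − μ(y,x), α-associator a(x,y,z) = μ(μ(x,y),α(z)) − μ(α(x),μ(y,z)), and S(x,y,z) = a(x,y,z) + a(y,z,x) + a(z,x,y). Then (V, μ, α) is Hom-Lie admissible (i.e. the commutator bracket satisfies the Hom-Jacobi identity Σ_cyclic [α(x),[y,z]] = 0) if and only if S(x,y,z) = S(x,z,y) for all x,y,z ∈ V. -/
theorem stmt_9 {K V : Type*} [Field K] [CharZero K] [AddCommGroup V] [Module K V]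
    (μ : V →ₗ[K] V →ₗ[K] V) (α : V →ₗ[K] V)
    (br : V → V → V) (hbr : ∀ x y : V, br x y = μ x y - μ y x)
    (a : V → V → V → V)
    (ha : ∀ x y z : V, a x y z = μ (μ x y) (α z) - μ (α x) (μ y z))
    (S : V → V → V → V)
    (hS : ∀ x y z : V, S x y z = a x y z + a y z x + a z x y) :
    (∀ x y z : V, br (α x) (br y z) + br (α y) (br z x) + br (α z) (br x y) = 0) ↔
    (∀ x y z : V, S x y z = S x z y) := by
  have key : ∀ x y z : V,
      br (α x) (br y z) + br (α y) (br z x) + br (α z) (br x y) = S x z y - S x y z := by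
    intro x y z
    simp only [hbr, hS, ha, map_sub, LinearMap.sub_apply]
    abel
  constructor
  · intro h x y z
    have := (key x y z).symm.trans (h x y z)
    exact (sub_eq_zero.mp this).symm
  · intro h x y z
    rw [key x y z, h x y z, sub_self]
end

section
/- Let (V, μ, α) be a Hom-algebra over a field of characteristic 0, with commutator [x,y] = μ(x,y) − μ(y,x) and symmetrized product x∙y = (1/2)(μ(x,y) + μ(y,x)). Then (V,μ,α) is flexible (i.e. μ(μ(x,y),α(x)) = μ(α(x),μ(y,x)) for all x,y) if and only if [α(x), y∙z] = [x,y]∙α(z) + α(y)∙[x,z] for all x,y,z ∈ V. -/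
theorem stmt_10 {K V : Type*} [Field K] [CharZero K] [AddCommGroup V] [Module K V]
    (μ : V →ₗ[K] V →ₗ[K] V) (α : V →ₗ[K] V)
    (br : V → V → V) (hbr : ∀ x y : V, br x y = μ x y - μ y x)
    (j : V → V → V) (hj : ∀ x y : V, j x y = ((2 : K)⁻¹) • (μ x y + μ y x)) :
    (∀ x y : V, μ (μ x y) (α x) = μ (α x) (μ y x)) ↔
    (∀ x y z : V, br (α x) (j y z) = j (br x y) (α z) + j (α y) (br x z)) := by
  constructor
  · intro h x y z
    have lin : ∀ a b c : V, μ (μ a b) (α c) + μ (μ c b) (α a)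
        = μ (α a) (μ b c) + μ (α c) (μ b a) := by
      intro a b c
      have h3 := h (a + c) b
      simp only [map_add, LinearMap.add_apply] at h3
      linear_combination (norm := module) h3 - h a b - h c b
    simp only [hbr, hj, map_add, map_sub, map_smul, LinearMap.add_apply,
      LinearMap.sub_apply, LinearMap.smul_apply]
    linear_combination (norm := module)
      ((2:K)⁻¹) • (lin y x z - lin x y z - lin x z y)
  · intro h x y
    have hx := h x y x
    simp only [hbr, hj, map_add, map_sub, map_smul, LinearMap.add_apply,
      LinearMap.sub_apply, LinearMap.smul_apply, sub_self, map_zero, smul_zero,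
      LinearMap.zero_apply] at hx
    linear_combination (norm := module) -hx
end

section
/- Let A be an associative K-algebra, w ∈ A an idempotent (w² = w), T ∈ A, a ∈ K, and define the new product x*y = a·(w x w T w y w). Then * is Hom-associative with twisting map α(s) = w s w; that is, α(x)*(y*z) = (x*y)*α(z) for all x,y,z ∈ A. Moreover * is in fact associative: x*(y*z) = (x*y)*z. -/
theorem stmt_14 {K A : Type*} [CommRing K] [NonUnitalRing A] [Module K A]
    [IsScalarTower K A A] [SMulCommClass K A A]
    (w T : A) (hw : w * w = w) (a : K)
    (star : A → A → A) (hstar : ∀ x y : A, star x y = a • (w * x * w * T * w * y * w))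
    (α : A → A) (hα : ∀ s : A, α s = w * s * w) :
    (∀ x y z : A, star (α x) (star y z) = star (star x y) (α z)) ∧
    (∀ x y z : A, star x (star y z) = star (star x y) z) := by
  have hw' : ∀ t : A, w * (w * t) = w * t := fun t => by rw [← mul_assoc, hw]
  constructor <;> intro x y z <;>
    simp [hstar, hα, mul_assoc, hw, hw', smul_smul, mul_smul_comm, smul_mul_assoc]
end

section
/- Let V be a 3-dimensional vector space over a field K of characteristic 0 with basis (X₁, X₂, X₃) and the sl(2)-type bracket [X₁,X₂] = 2X₂, [X₁,X₃] = −2X₃, [X₂,X₃] = X₁ (extended bilinearly and skew-symmetrically). A linear map α : V → V makes (V, [·,·], α) a Hom-Lie algebra (i.e. satisfies the Hom-Jacobi identity) if and only if the matrix of α in this basis has the form rows (a, d, c), (2c, b, f), (2d, e, b) for some a, b, c, d, e, f ∈ K. -/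
set_option maxHeartbeats 2000000 in

theorem stmt_15 {K : Type*} [Field K] [CharZero K]
    (br : (Fin 3 → K) →ₗ[K] (Fin 3 → K) →ₗ[K] (Fin 3 → K))
    (α : (Fin 3 → K) →ₗ[K] (Fin 3 → K))
    (X : Fin 3 → (Fin 3 → K)) (hX : ∀ i, X i = Pi.single i 1)
    (hskew : ∀ x y : Fin 3 → K, br x y = - br y x)
    (h12 : br (X 0) (X 1) = (2 : K) • X 1)
    (h13 : br (X 0) (X 2) = (-2 : K) • X 2)
    (h23 : br (X 1) (X 2) = X 0) :
    (∀ x y z : Fin 3 → K,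
      br (α x) (br y z) + br (α y) (br z x) + br (α z) (br x y) = 0) ↔
    (∃ a b c d e f : K,
      α (X 0) = a • X 0 + (2 * c) • X 1 + (2 * d) • X 2 ∧
      α (X 1) = d • X 0 + b • X 1 + e • X 2 ∧
      α (X 2) = c • X 0 + f • X 1 + b • X 2) := by
  have h2 : (2:K) ≠ 0 := two_ne_zero
  have hbasis : ∀ v : Fin 3 → K, v = v 0 • X 0 + v 1 • X 1 + v 2 • X 2 := by
    intro v
    funext j
    fin_cases j <;> simp [hX, Pi.single_apply]
  have hdiag : ∀ u : Fin 3 → K, br u u = 0 := by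
    intro u
    have h := hskew u u
    have h2' : (2:K) • br u u = 0 := by
      rw [two_smul]
      nth_rewrite 2 [h]
      simp
    rcases smul_eq_zero.mp h2' with h' | h'
    · exact absurd h' h2
    · exact h'
  have h21 : br (X 1) (X 0) = (-2:K) • X 1 := by
    rw [hskew, h12, neg_smul]
  have h31 : br (X 2) (X 0) = (2:K) • X 2 := by
    rw [hskew, h13, neg_smul, neg_neg]
  have h32 : br (X 2) (X 1) = - X 0 := by
    rw [hskew, h23]
  have hbr : ∀ u v : Fin 3 → K, br u v =
      (u 1 * v 2 - u 2 * v 1) • X 0 + (2*(u 0 * v 1 - u 1 * v 0)) • X 1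
        + (-2*(u 0 * v 2 - u 2 * v 0)) • X 2 := by
    intro u v
    conv_lhs => rw [hbasis u, hbasis v]
    simp only [map_add, map_smul, LinearMap.add_apply, LinearMap.smul_apply,
      h12, h13, h23, h21, h31, h32, hdiag, smul_zero]
    module
  constructor
  · intro H
    have e := H (X 0) (X 1) (X 2)
    have e0 := congrFun e 0
    have e1 := congrFun e 1
    have e2 := congrFun e 2
    simp [hbr, hX, Pi.single_apply] at e0 e1 e2
    refine ⟨α (X 0) 0, α (X 1) 1, α (X 2) 0, α (X 1) 0, α (X 1) 2, α (X 2) 1, ?_, ?_, ?_⟩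
    · funext j
      fin_cases j
      · simp [hX, Pi.single_apply]
      · simp [hX, Pi.single_apply]
        linear_combination (-1/2 : K) * e1
      · simp [hX, Pi.single_apply]
        linear_combination (1/2 : K) * e2
    · funext j
      fin_cases j <;> simp [hX, Pi.single_apply]
    · funext j
      fin_cases j
      · simp [hX, Pi.single_apply]
      · simp [hX, Pi.single_apply]
      · simp [hX, Pi.single_apply]
        linear_combination (-1/2 : K) * e0
  · rintro ⟨a, b, c, d, e, f, ha0, ha1, ha2⟩
    intro x y z
    have hbrc : ∀ u v : Fin 3 → K, br u v =
        ![u 1 * v 2 - u 2 * v 1, 2 * (u 0 * v 1 - u 1 * v 0),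
          -2 * (u 0 * v 2 - u 2 * v 0)] := by
      intro u v
      rw [hbr]
      funext j
      fin_cases j <;> simp [hX, Pi.single_apply]
    have hα : ∀ v : Fin 3 → K, α v = v 0 • α (X 0) + v 1 • α (X 1) + v 2 • α (X 2) := by
      intro v
      conv_lhs => rw [hbasis v]
      simp only [map_add, map_smul]
    have hav : ∀ v : Fin 3 → K, α v =
        ![a * v 0 + d * v 1 + c * v 2, 2 * c * v 0 + b * v 1 + f * v 2,
          2 * d * v 0 + e * v 1 + b * v 2] := by
      intro v
      rw [hα v, ha0, ha1, ha2]
      funext j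
      fin_cases j <;> simp [hX, Pi.single_apply] <;> ring
    rw [hbrc y z, hbrc z x, hbrc x y, hav x, hav y, hav z,
      hbrc, hbrc, hbrc]
    simp only [Matrix.cons_val_zero, Matrix.cons_val_one, Matrix.head_cons,
      Matrix.cons_val_two, Matrix.tail_cons, Matrix.cons_add_cons, Matrix.cons_eq_zero_iff]
    refine ⟨by ring, by ring, by ring, ?_⟩
    funext i
    exact i.elim0
end

section
/- Let V be a 3-dimensional vector space over a field K of characteristic 0 with basis (e₁,e₂,e₃), α the linear map with diagonal matrix diag(a,b,b) with a,b ∈ K, and the skew-symmetric bracket given (for a ≠ 0) by [e₁,e₂] = C₁ e₁ + C₂ e₃, [e₁,e₃] = C₃ e₂, [e₂,e₃] = C₄ e₁ + (b·C₁/a) e₃ for arbitrary constants C₁,C₂,C₃,C₄ ∈ K. Then (V, [·,·], α) is a Hom-Lie algebra, i.e. the Hom-Jacobi identity holds for all x,y,z ∈ V. -/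
set_option maxHeartbeats 2000000


theorem stmt_16 {K : Type*} [Field K] [CharZero K]
    (a b : K) (ha : a ≠ 0) (C1 C2 C3 C4 : K)
    (br : (Fin 3 → K) →ₗ[K] (Fin 3 → K) →ₗ[K] (Fin 3 → K))
    (α : (Fin 3 → K) →ₗ[K] (Fin 3 → K))
    (e : Fin 3 → (Fin 3 → K)) (he : ∀ i, e i = Pi.single i 1)
    (hα1 : α (e 0) = a • e 0) (hα2 : α (e 1) = b • e 1) (hα3 : α (e 2) = b • e 2)
    (hskew : ∀ x y : Fin 3 → K, br x y = - br y x)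
    (h12 : br (e 0) (e 1) = C1 • e 0 + C2 • e 2)
    (h13 : br (e 0) (e 2) = C3 • e 1)
    (h23 : br (e 1) (e 2) = C4 • e 0 + (b * C1 / a) • e 2) :
    ∀ x y z : Fin 3 → K,
      br (α x) (br y z) + br (α y) (br z x) + br (α z) (br x y) = 0 := by
  have hzero : ∀ x : Fin 3 → K, br x x = 0 := by
    intro x
    have h := hskew x x
    have h2 : (2 : K) • br x x = 0 := by
      rw [two_smul]
      nth_rewrite 2 [h]
      simp
    rcases smul_eq_zero.mp h2 with h3 | h3
    · exact absurd h3 (by norm_num)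
    · exact h3
  have h10 : br (e 1) (e 0) = -(C1 • e 0 + C2 • e 2) := by rw [hskew, h12]
  have h20 : br (e 2) (e 0) = -(C3 • e 1) := by rw [hskew, h13]
  have h21 : br (e 2) (e 1) = -(C4 • e 0 + (b * C1 / a) • e 2) := by rw [hskew, h23]
  intro x y z
  have hx : x = x 0 • e 0 + x 1 • e 1 + x 2 • e 2 := by
    simp only [he]; ext i; fin_cases i <;> simp
  have hy : y = y 0 • e 0 + y 1 • e 1 + y 2 • e 2 := by
    simp only [he]; ext i; fin_cases i <;> simp
  have hz : z = z 0 • e 0 + z 1 • e 1 + z 2 • e 2 := by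
    simp only [he]; ext i; fin_cases i <;> simp
  rw [hx, hy, hz]
  simp only [map_add, map_smul, LinearMap.add_apply, LinearMap.smul_apply,
    hα1, hα2, hα3, h12, h13, h23, h10, h20, h21, hzero,
    smul_add, smul_neg, smul_zero, add_zero, zero_add, smul_smul,
    map_neg, LinearMap.neg_apply, map_zero, LinearMap.zero_apply, neg_zero]
  match_scalars <;> field_simp <;> ring
end

section
/- Let (V, μ, α) be a G₂-Hom-associative algebra (Hom-Vinberg algebra), i.e. μ(α(x),μ(y,z)) − μ(α(y),μ(x,z)) = μ(μ(x,y),α(z)) − μ(μ(y,x),α(z)) for all x,y,z. Then the commutator bracket [x,y] = μ(x,y) − μ(y,x) satisfies the Hom-Jacobi identity [α(x),[y,z]] + [α(y),[z,x]] + [α(z),[x,y]] = 0, so (V,μ,α) is Hom-Lie admissible. -/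
theorem stmt_19 {K V : Type*} [Field K] [CharZero K] [AddCommGroup V] [Module K V]
    (μ : V →ₗ[K] V →ₗ[K] V) (α : V →ₗ[K] V)
    (hvin : ∀ x y z : V,
      μ (α x) (μ y z) - μ (α y) (μ x z) = μ (μ x y) (α z) - μ (μ y x) (α z)) :
    ∀ x y z : V,
      (μ (α x) (μ y z - μ z y) - μ (μ y z - μ z y) (α x)) +
      (μ (α y) (μ z x - μ x z) - μ (μ z x - μ x z) (α y)) +
      (μ (α z) (μ x y - μ y x) - μ (μ x y - μ y x) (α z)) = 0 := by
  intro x y z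
  simp only [map_sub, LinearMap.sub_apply]
  linear_combination (norm := abel) hvin x y z + hvin y z x + hvin z x y
end
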